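/- Let (m_n) be a sequence of positive integers and (μ_n) a sequence in (0,∞) such that m_n → ∞, μ_n → 0 and m_n^γ·μ_n → C as n → ∞ for some constant C ∈ (0, b/(1−γ)). Then the truncated density function admits the first-order expansion R_{m_n}(e^{μ_n}) = ρ_c + σ_c²·μ_n + o(μ_n), i.e. (R_{m_n}(e^{μ_n}) − ρ_c − σ_c²·μ_n)/μ_n → 0 as n → ∞. -/

import Mathlib

open Filter Topology

/-- Zero-range jump rates: `g 0 = 0`, `g n = 1 + b / n ^ γ` for `n ≥ 1`. -/
noncomputable def zrpG (b γ : ℝ) (n : ℕ) : ℝ := if n = 0 then 0 else 1 + b / (n : ℝ) ^ γ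

/-- Stationary weights: `w 0 = 1`, `w n = ∏_{k=1}^n 1 / g k`. -/
noncomputable def zrpW (b γ : ℝ) (n : ℕ) : ℝ := ∏ k ∈ Finset.Icc 1 n, (zrpG b γ k)⁻¹

/-- Single-site partition function `z φ = Σ_{k≥0} w k · φ^k`. -/
noncomputable def zrpZfun (b γ φ : ℝ) : ℝ := ∑' k : ℕ, zrpW b γ k * φ ^ k

/-- Critical density `ρ_c = (Σ k·w k) / z 1`. -/
noncomputable def zrpRhoC (b γ : ℝ) : ℝ :=
  (∑' k : ℕ, (k : ℝ) * zrpW b γ k) / (∑' k : ℕ, zrpW b γ k)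

/-- Critical variance `σ_c² = (Σ k²·w k) / z 1 − ρ_c²`. -/
noncomputable def zrpSigmaSq (b γ : ℝ) : ℝ :=
  (∑' k : ℕ, (k : ℝ) ^ 2 * zrpW b γ k) / (∑' k : ℕ, zrpW b γ k) - (zrpRhoC b γ) ^ 2

/-- Truncated partition function `z_m(φ) = Σ_{k=0}^m w k · φ^k`. -/
noncomputable def zrpZtrunc (b γ : ℝ) (m : ℕ) (φ : ℝ) : ℝ :=
  ∑ k ∈ Finset.range (m + 1), zrpW b γ k * φ ^ k

/-- Truncated density function `R_m(φ) = (Σ_{k=0}^m k·w k·φ^k) / z_m(φ)`. -/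
noncomputable def zrpRtrunc (b γ : ℝ) (m : ℕ) (φ : ℝ) : ℝ :=
  (∑ k ∈ Finset.range (m + 1), (k : ℝ) * zrpW b γ k * φ ^ k) / zrpZtrunc b γ m φ

/-- Canonical partition function `Z(L,N) = Σ_{η : Fin L → ℕ, Σ η = N} ∏ w (η x)`. -/
noncomputable def zrpZc (b γ : ℝ) (L N : ℕ) : ℝ :=
  ∑ η ∈ (Fintype.piFinset fun _ : Fin L => Finset.range (N + 1)).filter
      (fun η => ∑ x, η x = N),
    ∏ x, zrpW b γ (η x)

/-- Cut-off canonical partition function, restricting to `η x ≤ m` for all `x`. -/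
noncomputable def zrpQc (b γ : ℝ) (L N m : ℕ) : ℝ :=
  ∑ η ∈ (Fintype.piFinset fun _ : Fin L => Finset.range (N + 1)).filter
      (fun η => ∑ x, η x = N ∧ ∀ x, η x ≤ m),
    ∏ x, zrpW b γ (η x)

/-- Finite-size rate function `I_{L,N}(m)`. -/
noncomputable def zrpI (b γ : ℝ) (L N m : ℕ) : ℝ :=
  -(1 / (L : ℝ)) * Real.log ((zrpQc b γ L N m - zrpQc b γ L N (m - 1)) / zrpZc b γ L N)

lemma zrpG_ge_one {b γ : ℝ} (hb : 0 < b) {k : ℕ} (hk : k ≠ 0) : 1 ≤ zrpG b γ k := by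
  rw [zrpG, if_neg hk]
  have h : (0:ℝ) < (k:ℝ) ^ γ :=
    Real.rpow_pos_of_pos (by exact_mod_cast Nat.pos_of_ne_zero hk) γ
  have := div_pos hb h
  linarith

lemma zrpW_pos {b γ : ℝ} (hb : 0 < b) (n : ℕ) : 0 < zrpW b γ n := by
  refine Finset.prod_pos fun k hk => ?_
  have hk0 : k ≠ 0 := by
    have := (Finset.mem_Icc.mp hk).1; omega
  exact inv_pos.mpr (lt_of_lt_of_le one_pos (zrpG_ge_one hb hk0))

lemma zrpW_le_one {b γ : ℝ} (hb : 0 < b) (n : ℕ) : zrpW b γ n ≤ 1 := by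
  refine Finset.prod_le_one (fun k hk => ?_) (fun k hk => ?_)
  · have hk0 : k ≠ 0 := by have := (Finset.mem_Icc.mp hk).1; omega
    exact inv_nonneg.mpr (le_trans zero_le_one (zrpG_ge_one hb hk0))
  · have hk0 : k ≠ 0 := by have := (Finset.mem_Icc.mp hk).1; omega
    exact inv_le_one_of_one_le₀ (zrpG_ge_one hb hk0)

lemma zrpW_succ (b γ : ℝ) (n : ℕ) :
    zrpW b γ (n + 1) = zrpW b γ n * (zrpG b γ (n + 1))⁻¹ := by
  rw [zrpW, zrpW, Finset.prod_Icc_succ_top (by omega : 1 ≤ n + 1)]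

lemma log_zrpG_step {b γ δ : ℝ} (hγ0 : 0 < γ) (hγ1 : γ < 1) (hb : 0 < b)
    (hδ0 : 0 ≤ δ) (hδ : δ * (1 - γ) < b) :
    ∃ J : ℕ, ∀ j : ℕ, J ≤ j → 1 ≤ j →
      δ * (((j:ℝ) + 1) ^ (1 - γ) - (j:ℝ) ^ (1 - γ)) ≤ Real.log (1 + b / ((j:ℝ) + 1) ^ γ) := by
  set b' := δ * (1 - γ) with hb'def
  have hb'0 : 0 ≤ b' := mul_nonneg hδ0 (by linarith)
  set mid := (b' + b) / 2 with hmid_def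
  have hmid1 : b' < mid := by rw [hmid_def]; linarith
  have hmid2 : mid < b := by rw [hmid_def]; linarith
  have hnat : Tendsto (fun j : ℕ => ((j:ℝ) + 1)) atTop atTop :=
    tendsto_atTop_add_const_right _ 1 tendsto_natCast_atTop_atTop
  have hz : Tendsto (fun j : ℕ => ((j:ℝ) + 1) ^ (-γ)) atTop (𝓝 0) :=
    (tendsto_rpow_neg_atTop hγ0).comp hnat
  have hR : Tendsto (fun j : ℕ => b - b ^ 2 * ((j:ℝ) + 1) ^ (-γ)) atTop (𝓝 b) := by
    have := (tendsto_const_nhds : Tendsto (fun _ : ℕ => b) atTop (𝓝 b)).sub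
      (hz.const_mul (b ^ 2))
    simpa using this
  have hratio : Tendsto (fun j : ℕ => ((j:ℝ) + 1) / j) atTop (𝓝 1) := by
    have h1 : Tendsto (fun j : ℕ => 1 + (j:ℝ)⁻¹) atTop (𝓝 1) := by
      simpa using tendsto_const_nhds.add (tendsto_inv_atTop_nhds_zero_nat : Tendsto (fun n : ℕ => (n:ℝ)⁻¹) atTop (𝓝 0))
    refine h1.congr' ?_
    filter_upwards [eventually_gt_atTop 0] with j hj
    have hj0 : (j:ℝ) ≠ 0 := by positivity
    field_simp
  have hL : Tendsto (fun j : ℕ => b' * (((j:ℝ) + 1) / j) ^ γ) atTop (𝓝 b') := by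
    have := (hratio.rpow_const (Or.inr hγ0.le)).const_mul b'
    simpa using this
  have h1 := hL.eventually (gt_mem_nhds hmid1)
  have h2 := hR.eventually (lt_mem_nhds hmid2)
  obtain ⟨J, hJ⟩ := eventually_atTop.mp (h1.and h2)
  refine ⟨J, fun j hj hj1 => ?_⟩
  obtain ⟨hJ1, hJ2⟩ := hJ j hj
  have hx0 : (0:ℝ) < (j:ℝ) := by exact_mod_cast hj1
  set x : ℝ := (j:ℝ) with hxdef
  have hx1 : (0:ℝ) < x + 1 := by linarith
  set z : ℝ := (x + 1) ^ (-γ) with hzdef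
  have hz0 : 0 < z := Real.rpow_pos_of_pos hx1 _
  -- step 1: Δ ≤ (1-γ) x^{-γ}
  have hbern : (1 + x⁻¹) ^ (1 - γ) ≤ 1 + (1 - γ) * x⁻¹ :=
    rpow_one_add_le_one_add_mul_self (by have := inv_nonneg.mpr hx0.le; linarith) (by linarith) (by linarith)
  have hxpow : (x + 1) ^ (1 - γ) = x ^ (1 - γ) * (1 + x⁻¹) ^ (1 - γ) := by
    rw [← Real.mul_rpow hx0.le (by positivity)]
    congr 1
    field_simp
  have hxg : 0 < x ^ (1 - γ) := Real.rpow_pos_of_pos hx0 _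
  have hxneg : x ^ (1 - γ) * x⁻¹ = x ^ (-γ) := by
    rw [← Real.rpow_neg_one x, ← Real.rpow_add hx0]
    ring_nf
  have hΔ : (x + 1) ^ (1 - γ) - x ^ (1 - γ) ≤ (1 - γ) * x ^ (-γ) := by
    have := mul_le_mul_of_nonneg_left hbern hxg.le
    rw [← hxpow] at this
    calc (x + 1) ^ (1 - γ) - x ^ (1 - γ)
        ≤ x ^ (1 - γ) * (1 + (1 - γ) * x⁻¹) - x ^ (1 - γ) := by linarith
      _ = (1 - γ) * (x ^ (1 - γ) * x⁻¹) := by ring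
      _ = (1 - γ) * x ^ (-γ) := by rw [hxneg]
  -- step 2: b' x^{-γ} ≤ (b - b² z) z
  have hxinv : x ^ (-γ) = ((x + 1) / x) ^ γ * z := by
    rw [hzdef, Real.div_rpow hx1.le hx0.le, Real.rpow_neg hx1.le, Real.rpow_neg hx0.le]
    field_simp
  have hchain : b' * x ^ (-γ) ≤ (b - b ^ 2 * z) * z := by
    rw [hxinv, ← mul_assoc]
    have h3 : b' * ((x + 1) / x) ^ γ ≤ b - b ^ 2 * z := le_trans hJ1.le hJ2.le
    exact mul_le_mul_of_nonneg_right h3 hz0.le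
  -- step 3: y - y² ≤ log(1+y), y = b z
  have hy : b / (x + 1) ^ γ = b * z := by
    rw [hzdef, Real.rpow_neg hx1.le]; ring
  have hy0 : 0 < b * z := by positivity
  have hlog : b * z - (b * z) ^ 2 ≤ Real.log (1 + b * z) := by
    have h4 : (0:ℝ) < 1 + b * z := by linarith
    have h5 := Real.log_le_sub_one_of_pos (inv_pos.mpr h4)
    rw [Real.log_inv] at h5
    have h6 : b * z / (1 + b * z) ≤ Real.log (1 + b * z) := by
      rw [inv_eq_one_div] at h5
      have : 1 / (1 + b * z) - 1 = -(b * z / (1 + b * z)) := by field_simp; ring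
      linarith [this ▸ h5]
    have h7 : b * z - (b * z) ^ 2 ≤ b * z / (1 + b * z) := by
      rw [le_div_iff₀ h4]
      nlinarith [pow_pos hy0 3]
    linarith
  rw [hy]
  calc δ * ((x + 1) ^ (1 - γ) - x ^ (1 - γ)) ≤ δ * ((1 - γ) * x ^ (-γ)) := by
        apply mul_le_mul_of_nonneg_left hΔ hδ0
    _ = b' * x ^ (-γ) := by rw [hb'def]; ring
    _ ≤ (b - b ^ 2 * z) * z := hchain
    _ = b * z - (b * z) ^ 2 := by ring
    _ ≤ Real.log (1 + b * z) := hlog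


lemma zrpW_bound {b γ δ : ℝ} (hγ0 : 0 < γ) (hγ1 : γ < 1) (hb : 0 < b)
    (hδ0 : 0 ≤ δ) (hδ : δ * (1 - γ) < b) :
    ∃ M : ℝ, 1 ≤ M ∧ ∀ n : ℕ, zrpW b γ n ≤ M * Real.exp (-(δ * (n:ℝ) ^ (1 - γ))) := by
  obtain ⟨J0, hJ⟩ := log_zrpG_step hγ0 hγ1 hb hδ0 hδ
  set J := max J0 1 with hJdef
  refine ⟨Real.exp (δ * (J:ℝ) ^ (1 - γ)), Real.one_le_exp (by positivity), ?_⟩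
  have key : ∀ n, J ≤ n →
      zrpW b γ n ≤ Real.exp (δ * (J:ℝ) ^ (1 - γ) - δ * (n:ℝ) ^ (1 - γ)) := by
    intro n hn
    induction n, hn using Nat.le_induction with
    | base => simpa using zrpW_le_one hb J
    | succ n hn ih =>
      have hg1 : 1 ≤ zrpG b γ (n + 1) := zrpG_ge_one hb (Nat.succ_ne_zero n)
      have hstep : δ * (((n:ℝ) + 1) ^ (1 - γ) - (n:ℝ) ^ (1 - γ)) ≤
          Real.log (zrpG b γ (n + 1)) := by
        have h := hJ n (le_trans (le_max_left _ _) hn) (le_trans (le_max_right _ _) hn)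
        rw [zrpG, if_neg (Nat.succ_ne_zero n)]
        push_cast
        exact h
      have hginv : (zrpG b γ (n + 1))⁻¹ ≤
          Real.exp (-(δ * (((n:ℝ) + 1) ^ (1 - γ) - (n:ℝ) ^ (1 - γ)))) := by
        rw [← Real.exp_log (by linarith : (0:ℝ) < zrpG b γ (n + 1)), ← Real.exp_neg]
        exact Real.exp_le_exp.mpr (by linarith)
      rw [zrpW_succ]
      calc zrpW b γ n * (zrpG b γ (n + 1))⁻¹
          ≤ Real.exp (δ * (J:ℝ) ^ (1 - γ) - δ * (n:ℝ) ^ (1 - γ)) *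
              Real.exp (-(δ * (((n:ℝ) + 1) ^ (1 - γ) - (n:ℝ) ^ (1 - γ)))) :=
            mul_le_mul ih hginv (inv_nonneg.mpr (by linarith)) (Real.exp_pos _).le
        _ = Real.exp (δ * (J:ℝ) ^ (1 - γ) - δ * (((n + 1 : ℕ)):ℝ) ^ (1 - γ)) := by
            rw [← Real.exp_add]; push_cast; ring_nf
  intro n
  rw [← Real.exp_add]
  rcases le_or_gt J n with h | h
  · calc zrpW b γ n ≤ _ := key n h
      _ ≤ _ := Real.exp_le_exp.mpr (by ring_nf; exact le_refl _)
  · calc zrpW b γ n ≤ 1 := zrpW_le_one hb n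
      _ ≤ Real.exp (δ * (J:ℝ) ^ (1 - γ) + -(δ * (n:ℝ) ^ (1 - γ))) := by
          apply Real.one_le_exp
          have h2 : (n:ℝ) ^ (1 - γ) ≤ (J:ℝ) ^ (1 - γ) :=
            Real.rpow_le_rpow (Nat.cast_nonneg n) (by exact_mod_cast h.le) (by linarith)
          nlinarith


lemma summable_pow_mul_exp {γ ε : ℝ} (hγ1 : γ < 1) (hε : 0 < ε) (q : ℕ) :
    Summable (fun k : ℕ => (k:ℝ) ^ q * Real.exp (-(ε * (k:ℝ) ^ (1 - γ)))) := by
  rw [← summable_nat_add_iff 1]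
  set N := ⌈((q:ℝ) + 2) / (1 - γ)⌉₊ with hNdef
  set c : ℝ := (N.factorial : ℝ) / ε ^ N with hcdef
  have hsum2 : Summable (fun k : ℕ => c * ((k + 1 : ℕ) : ℝ) ^ (-2:ℝ)) :=
    ((summable_nat_add_iff 1).mpr
      (Real.summable_nat_rpow.mpr (by norm_num : (-2:ℝ) < -1))).mul_left c
  refine Summable.of_nonneg_of_le (fun k => by positivity) (fun k => ?_) hsum2
  set x : ℝ := ((k + 1 : ℕ) : ℝ) with hxdef
  have hx1 : (1:ℝ) ≤ x := by
    rw [hxdef]; push_cast; linarith [Nat.cast_nonneg (α := ℝ) k]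
  have hx0 : (0:ℝ) < x := lt_of_lt_of_le one_pos hx1
  set t : ℝ := ε * x ^ (1 - γ) with htdef
  have ht0 : 0 ≤ t := by positivity
  have hfac : t ^ N / (N.factorial : ℝ) ≤ Real.exp t := Real.pow_div_factorial_le_exp t ht0 N
  have hxN : (x ^ (1 - γ)) ^ N = x ^ ((1 - γ) * (N:ℝ)) := by
    rw [← Real.rpow_natCast (x ^ (1 - γ)) N, ← Real.rpow_mul hx0.le]
  have hexp_le : ((q:ℝ) + 2) ≤ (1 - γ) * (N:ℝ) := by
    have h1 : ((q:ℝ) + 2) / (1 - γ) ≤ (N:ℝ) := Nat.le_ceil _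
    rw [div_le_iff₀ (by linarith : (0:ℝ) < 1 - γ)] at h1
    linarith
  have hmono : x ^ ((q:ℝ) + 2) ≤ x ^ ((1 - γ) * (N:ℝ)) :=
    Real.rpow_le_rpow_of_exponent_le hx1 hexp_le
  have hkey : x ^ ((q:ℝ) + 2) * Real.exp (-t) ≤ c := by
    have h2 : ε ^ N * x ^ ((1 - γ) * (N:ℝ)) / (N.factorial : ℝ) ≤ Real.exp t := by
      rw [← hxN, ← mul_pow]; exact hfac
    have h3 : x ^ ((1 - γ) * (N:ℝ)) ≤ c * Real.exp t := by
      rw [hcdef, div_mul_eq_mul_div, le_div_iff₀ (by positivity : (0:ℝ) < ε ^ N)]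
      rw [div_le_iff₀ (by positivity : (0:ℝ) < (N.factorial : ℝ))] at h2
      linarith [h2]
    calc x ^ ((q:ℝ) + 2) * Real.exp (-t) ≤ x ^ ((1 - γ) * (N:ℝ)) * Real.exp (-t) :=
          mul_le_mul_of_nonneg_right hmono (Real.exp_nonneg _)
      _ ≤ c * Real.exp t * Real.exp (-t) :=
          mul_le_mul_of_nonneg_right h3 (Real.exp_nonneg _)
      _ = c := by rw [mul_assoc, ← Real.exp_add]; simp
  have hsplit : (x:ℝ) ^ q * Real.exp (-t) = (x ^ ((q:ℝ) + 2) * Real.exp (-t)) * x ^ (-2:ℝ) := by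
    have : x ^ ((q:ℝ) + 2) * x ^ (-2:ℝ) = x ^ (q:ℝ) := by
      rw [← Real.rpow_add hx0]; norm_num
    rw [mul_right_comm, this, Real.rpow_natCast]
  calc (x:ℝ) ^ q * Real.exp (-t) = (x ^ ((q:ℝ) + 2) * Real.exp (-t)) * x ^ (-2:ℝ) := hsplit
    _ ≤ c * x ^ (-2:ℝ) :=
        mul_le_mul_of_nonneg_right hkey (Real.rpow_nonneg hx0.le _)

lemma exp_sub_one_sub_le {x : ℝ} (hx : 0 ≤ x) :
    Real.exp x - 1 - x ≤ x ^ 2 * Real.exp x := by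
  have h2 := Real.add_one_le_exp (-x)
  have h3 : Real.exp (-x) * Real.exp x = 1 := by rw [← Real.exp_add]; simp
  have h1 : (1 - x) * Real.exp x ≤ 1 := by nlinarith [Real.exp_pos x]
  nlinarith [mul_nonneg hx (by linarith : (0:ℝ) ≤ 1 - (1 - x) * Real.exp x)]


/-- Moment sums at the critical point. -/
noncomputable def zrpS (b γ : ℝ) (q : ℕ) : ℝ := ∑' k : ℕ, (k:ℝ) ^ q * zrpW b γ k

/-- Truncated moment sums. -/
noncomputable def zrpA (b γ μ : ℝ) (m : ℕ) (q : ℕ) : ℝ :=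
  ∑ k ∈ Finset.range (m + 1), (k:ℝ) ^ q * zrpW b γ k * Real.exp μ ^ k

lemma zrp_summable {b γ : ℝ} (hγ0 : 0 < γ) (hγ1 : γ < 1) (hb : 0 < b) (q : ℕ) :
    Summable (fun k : ℕ => (k:ℝ) ^ q * zrpW b γ k) := by
  have h1γ : (0:ℝ) < 1 - γ := by linarith
  have hδ0 : (0:ℝ) < b / (2 * (1 - γ)) := by positivity
  have hδb : b / (2 * (1 - γ)) * (1 - γ) < b := by
    have : b / (2 * (1 - γ)) * (1 - γ) = b / 2 := by field_simp
    rw [this]; linarith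
  obtain ⟨M, hM1, hMw⟩ := zrpW_bound hγ0 hγ1 hb hδ0.le hδb
  refine Summable.of_nonneg_of_le
    (fun k => mul_nonneg (by positivity) (zrpW_pos hb k).le) (fun k => ?_)
    ((summable_pow_mul_exp hγ1 hδ0 q).mul_left M)
  calc (k:ℝ) ^ q * zrpW b γ k
      ≤ (k:ℝ) ^ q * (M * Real.exp (-(b / (2 * (1 - γ)) * (k:ℝ) ^ (1 - γ)))) :=
        mul_le_mul_of_nonneg_left (hMw k) (by positivity)
    _ = M * ((k:ℝ) ^ q * Real.exp (-(b / (2 * (1 - γ)) * (k:ℝ) ^ (1 - γ)))) := by ring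


set_option maxHeartbeats 1000000 in
lemma zrp_A_expansion {b γ : ℝ} (hγ0 : 0 < γ) (hγ1 : γ < 1) (hb : 0 < b)
    (m : ℕ → ℕ) (μ : ℕ → ℝ) (C : ℝ)
    (hmpos : ∀ n, 0 < m n) (hμpos : ∀ n, 0 < μ n)
    (hm : Tendsto m atTop atTop)
    (hC : Tendsto (fun n => (m n : ℝ) ^ γ * μ n) atTop (nhds C))
    (hμ : Tendsto μ atTop (nhds 0))
    (hC0 : 0 < C) (hCb : C < b / (1 - γ)) (j : ℕ) :
    Tendsto (fun n => (zrpA b γ (μ n) (m n) j - zrpS b γ j - μ n * zrpS b γ (j + 1)) / μ n)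
      atTop (𝓝 0) := by
  have h1γ : (0:ℝ) < 1 - γ := by linarith
  have hbγ : 0 < b / (1 - γ) := div_pos hb h1γ
  set δ : ℝ := (C + b / (1 - γ)) / 2 with hδdef
  have hδC : C < δ := by rw [hδdef]; linarith
  have hδ0 : 0 < δ := by rw [hδdef]; linarith
  have hδb : δ * (1 - γ) < b := by
    rw [lt_div_iff₀ h1γ] at hCb
    have hxx : b / (1 - γ) * (1 - γ) = b := div_mul_cancel₀ b h1γ.ne'
    rw [hδdef]
    nlinarith
  obtain ⟨M, hM1, hMw⟩ := zrpW_bound hγ0 hγ1 hb hδ0.le hδb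
  set ε : ℝ := (δ - C) / 2 with hεdef
  have hε0 : 0 < ε := by rw [hεdef]; linarith
  set δ' : ℝ := (C + δ) / 2 with hδ'def
  have hδ'1 : C < δ' := by rw [hδ'def]; linarith
  have hδ'2 : δ' = δ - ε := by rw [hδ'def, hεdef]; ring
  have hwpos : ∀ k, 0 < zrpW b γ k := zrpW_pos hb
  have hSsum : ∀ q : ℕ, Summable (fun k : ℕ => (k:ℝ) ^ q * zrpW b γ k) :=
    zrp_summable hγ0 hγ1 hb
  have hBsum : Summable (fun k : ℕ => (k:ℝ) ^ (j + 2) * Real.exp (-(ε * (k:ℝ) ^ (1 - γ)))) :=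
    summable_pow_mul_exp hγ1 hε0 (j + 2)
  set B : ℝ := M * ∑' k : ℕ, (k:ℝ) ^ (j + 2) * Real.exp (-(ε * (k:ℝ) ^ (1 - γ))) with hBdef
  set T : ℕ → ℝ := fun n => ∑' i : ℕ,
    (Nat.cast (i + (m n + 1)) : ℝ) ^ (j + 1) * zrpW b γ (i + (m n + 1)) with hTdef
  have hTlim : Tendsto T atTop (𝓝 0) := by
    have h1 : Tendsto (fun n => m n + 1) atTop atTop :=
      tendsto_atTop_mono (fun n => Nat.le_succ (m n)) hm
    exact (tendsto_sum_nat_add (fun k => (k:ℝ) ^ (j + 1) * zrpW b γ k)).comp h1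
  have hT0 : ∀ n, 0 ≤ T n := fun n =>
    tsum_nonneg fun i => mul_nonneg (by positivity) (hwpos _).le
  have hev1 : ∀ᶠ n in atTop, (m n : ℝ) ^ γ * μ n < δ' := hC.eventually (gt_mem_nhds hδ'1)
  have hev2 : ∀ᶠ n in atTop, C / 2 < (m n : ℝ) ^ γ * μ n :=
    hC.eventually (lt_mem_nhds (by linarith))
  refine squeeze_zero_norm' (a := fun n => μ n * B + (2 / C + 1) * T n) ?_ ?_
  swap
  · have h := (hμ.mul_const B).add (hTlim.const_mul (2 / C + 1))
    simpa only [zero_mul, mul_zero, add_zero] using h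
  filter_upwards [hev1, hev2] with n h1 h2
  have hμn : 0 < μ n := hμpos n
  have hm1 : 1 ≤ m n := hmpos n
  -- summability of shifted tails
  have e1 : Summable (fun i : ℕ => (Nat.cast (i + (m n + 1)) : ℝ) ^ j * zrpW b γ (i + (m n + 1))) :=
    (summable_nat_add_iff (f := fun k : ℕ => (k:ℝ) ^ j * zrpW b γ k) (m n + 1)).mpr (hSsum j)
  have e2 : Summable
      (fun i : ℕ => (Nat.cast (i + (m n + 1)) : ℝ) ^ (j + 1) * zrpW b γ (i + (m n + 1))) :=
    (summable_nat_add_iff (f := fun k : ℕ => (k:ℝ) ^ (j + 1) * zrpW b γ k) (m n + 1)).mpr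
      (hSsum (j + 1))
  set P : ℝ := ∑ k ∈ Finset.range (m n + 1), (k:ℝ) ^ j * zrpW b γ k *
      (Real.exp ((k:ℝ) * μ n) - 1 - (k:ℝ) * μ n) with hPdef
  set Q : ℝ := ∑' i : ℕ, (Nat.cast (i + (m n + 1)) : ℝ) ^ j * zrpW b γ (i + (m n + 1)) *
      (1 + μ n * (Nat.cast (i + (m n + 1)) : ℝ)) with hQdef
  have hQsum : Summable (fun i : ℕ => (Nat.cast (i + (m n + 1)) : ℝ) ^ j *
      zrpW b γ (i + (m n + 1)) * (1 + μ n * (Nat.cast (i + (m n + 1)) : ℝ))) := by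
    refine (e1.add (e2.mul_left (μ n))).congr fun i => ?_
    rw [pow_succ]; ring
  -- the numerator equals P - Q
  have hsj : (∑' k : ℕ, (k:ℝ) ^ j * zrpW b γ k) =
      (∑ k ∈ Finset.range (m n + 1), (k:ℝ) ^ j * zrpW b γ k)
      + ∑' i : ℕ, (Nat.cast (i + (m n + 1)) : ℝ) ^ j * zrpW b γ (i + (m n + 1)) :=
    (Summable.sum_add_tsum_nat_add (m n + 1) (hSsum j)).symm
  have hsj1 : (∑' k : ℕ, (k:ℝ) ^ (j + 1) * zrpW b γ k) =
      (∑ k ∈ Finset.range (m n + 1), (k:ℝ) ^ (j + 1) * zrpW b γ k)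
      + ∑' i : ℕ, (Nat.cast (i + (m n + 1)) : ℝ) ^ (j + 1) * zrpW b γ (i + (m n + 1)) :=
    (Summable.sum_add_tsum_nat_add (m n + 1) (hSsum (j + 1))).symm
  have hPeq : P = zrpA b γ (μ n) (m n) j
      - (∑ k ∈ Finset.range (m n + 1), (k:ℝ) ^ j * zrpW b γ k)
      - μ n * (∑ k ∈ Finset.range (m n + 1), (k:ℝ) ^ (j + 1) * zrpW b γ k) := by
    rw [hPdef, zrpA, Finset.mul_sum, ← Finset.sum_sub_distrib, ← Finset.sum_sub_distrib]
    refine Finset.sum_congr rfl fun k _ => ?_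
    rw [← Real.exp_nat_mul, pow_succ]
    ring
  have hQeq : Q = (∑' i : ℕ, (Nat.cast (i + (m n + 1)) : ℝ) ^ j * zrpW b γ (i + (m n + 1)))
      + μ n * (∑' i : ℕ, (Nat.cast (i + (m n + 1)) : ℝ) ^ (j + 1) * zrpW b γ (i + (m n + 1))) := by
    rw [hQdef, ← tsum_mul_left, ← Summable.tsum_add e1 (e2.mul_left (μ n))]
    exact tsum_congr fun i => by rw [pow_succ]; ring
  have hnum : zrpA b γ (μ n) (m n) j - zrpS b γ j - μ n * zrpS b γ (j + 1) = P - Q := by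
    rw [zrpS, zrpS, hsj, hsj1, hPeq, hQeq]; ring
  -- per-term weight bound
  have hweb : ∀ k : ℕ, k ≤ m n → zrpW b γ k * Real.exp ((k:ℝ) * μ n) ≤
      M * Real.exp (-(ε * (k:ℝ) ^ (1 - γ))) := by
    intro k hk
    rcases Nat.eq_zero_or_pos k with rfl | hk1
    · have hz : ((0:ℕ):ℝ) ^ (1 - γ) = 0 := by
        rw [Nat.cast_zero, Real.zero_rpow (ne_of_gt h1γ)]
      rw [hz]
      simp [zrpW]
      linarith
    · have hk0 : (0:ℝ) < (k:ℝ) := by exact_mod_cast hk1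
      have hsplit : (k:ℝ) = (k:ℝ) ^ γ * (k:ℝ) ^ (1 - γ) := by
        rw [← Real.rpow_add hk0]; norm_num
      have hkm : (k:ℝ) ^ γ ≤ (m n : ℝ) ^ γ :=
        Real.rpow_le_rpow hk0.le (by exact_mod_cast hk) hγ0.le
      have hkr : (0:ℝ) ≤ (k:ℝ) ^ (1 - γ) := Real.rpow_nonneg hk0.le _
      have hμk : (k:ℝ) * μ n ≤ δ' * (k:ℝ) ^ (1 - γ) := by
        calc (k:ℝ) * μ n = (k:ℝ) ^ γ * μ n * (k:ℝ) ^ (1 - γ) := by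
              nth_rewrite 1 [hsplit]; ring
          _ ≤ (m n : ℝ) ^ γ * μ n * (k:ℝ) ^ (1 - γ) :=
              mul_le_mul_of_nonneg_right
                (mul_le_mul_of_nonneg_right hkm hμn.le) hkr
          _ ≤ δ' * (k:ℝ) ^ (1 - γ) := mul_le_mul_of_nonneg_right h1.le hkr
      calc zrpW b γ k * Real.exp ((k:ℝ) * μ n)
          ≤ (M * Real.exp (-(δ * (k:ℝ) ^ (1 - γ)))) * Real.exp (δ' * (k:ℝ) ^ (1 - γ)) :=
            mul_le_mul (hMw k) (Real.exp_le_exp.mpr hμk) (Real.exp_pos _).le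
              (mul_nonneg (by linarith) (Real.exp_pos _).le)
        _ = M * Real.exp (-(ε * (k:ℝ) ^ (1 - γ))) := by
            rw [mul_assoc, ← Real.exp_add]
            congr 2
            rw [hδ'2]; ring
  -- bounds on P
  have hPnonneg : 0 ≤ P := by
    refine Finset.sum_nonneg fun k _ => ?_
    have h := Real.add_one_le_exp ((k:ℝ) * μ n)
    exact mul_nonneg (mul_nonneg (by positivity) (hwpos k).le) (by linarith)
  have hPle : P ≤ μ n ^ 2 * B := by
    calc P ≤ ∑ k ∈ Finset.range (m n + 1),
        μ n ^ 2 * M * ((k:ℝ) ^ (j + 2) * Real.exp (-(ε * (k:ℝ) ^ (1 - γ)))) := by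
          refine Finset.sum_le_sum fun k hk => ?_
          have hkm : k ≤ m n := by have := Finset.mem_range.mp hk; omega
          have hx : (0:ℝ) ≤ (k:ℝ) * μ n := by positivity
          have hq := exp_sub_one_sub_le hx
          calc (k:ℝ) ^ j * zrpW b γ k * (Real.exp ((k:ℝ) * μ n) - 1 - (k:ℝ) * μ n)
              ≤ (k:ℝ) ^ j * zrpW b γ k * (((k:ℝ) * μ n) ^ 2 * Real.exp ((k:ℝ) * μ n)) :=
                mul_le_mul_of_nonneg_left hq
                  (mul_nonneg (by positivity) (hwpos k).le)
            _ = μ n ^ 2 * (k:ℝ) ^ (j + 2) * (zrpW b γ k * Real.exp ((k:ℝ) * μ n)) := by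
                rw [pow_add]; ring
            _ ≤ μ n ^ 2 * (k:ℝ) ^ (j + 2) * (M * Real.exp (-(ε * (k:ℝ) ^ (1 - γ)))) :=
                mul_le_mul_of_nonneg_left (hweb k hkm) (by positivity)
            _ = μ n ^ 2 * M * ((k:ℝ) ^ (j + 2) * Real.exp (-(ε * (k:ℝ) ^ (1 - γ)))) := by
                ring
      _ = μ n ^ 2 * M * ∑ k ∈ Finset.range (m n + 1),
          ((k:ℝ) ^ (j + 2) * Real.exp (-(ε * (k:ℝ) ^ (1 - γ)))) := by
          rw [Finset.mul_sum]
      _ ≤ μ n ^ 2 * M * ∑' k : ℕ, ((k:ℝ) ^ (j + 2) * Real.exp (-(ε * (k:ℝ) ^ (1 - γ)))) := by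
          refine mul_le_mul_of_nonneg_left
            (Summable.sum_le_tsum _ (fun k _ => by positivity) hBsum) (by positivity)
      _ = μ n ^ 2 * B := by rw [hBdef]; ring
  -- bounds on Q
  have hQnonneg : 0 ≤ Q := by
    refine tsum_nonneg fun i => ?_
    have : (0:ℝ) ≤ 1 + μ n * (Nat.cast (i + (m n + 1)) : ℝ) := by positivity
    exact mul_nonneg (mul_nonneg (by positivity) (hwpos _).le) this
  have hQle : Q ≤ (1 / ((m n : ℝ) + 1) + μ n) * T n := by
    rw [hQdef, hTdef, ← tsum_mul_left]
    refine Summable.tsum_le_tsum (fun i => ?_) hQsum (e2.mul_left _)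
    set x : ℝ := (Nat.cast (i + (m n + 1)) : ℝ) with hxdef
    have hxge : (m n : ℝ) + 1 ≤ x := by rw [hxdef]; push_cast; linarith [Nat.cast_nonneg (α := ℝ) i]
    have hx0 : (0:ℝ) < x := by linarith [Nat.cast_nonneg (α := ℝ) (m n)]
    have hm0 : (0:ℝ) < (m n : ℝ) + 1 := by positivity
    have hxj : (0:ℝ) ≤ x ^ j := by positivity
    have hkey : x ^ j ≤ x ^ (j + 1) / ((m n : ℝ) + 1) := by
      rw [le_div_iff₀ hm0, pow_succ]
      exact mul_le_mul_of_nonneg_left hxge hxj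
    have hw := (hwpos (i + (m n + 1))).le
    calc x ^ j * zrpW b γ (i + (m n + 1)) * (1 + μ n * x)
        = x ^ j * zrpW b γ (i + (m n + 1)) + μ n * (x ^ (j + 1) * zrpW b γ (i + (m n + 1))) := by
          rw [pow_succ]; ring
      _ ≤ (x ^ (j + 1) / ((m n : ℝ) + 1)) * zrpW b γ (i + (m n + 1))
          + μ n * (x ^ (j + 1) * zrpW b γ (i + (m n + 1))) := by
          have := mul_le_mul_of_nonneg_right hkey hw
          linarith
      _ = (1 / ((m n : ℝ) + 1) + μ n) * (x ^ (j + 1) * zrpW b γ (i + (m n + 1))) := by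
          ring
  -- conclude
  rw [Real.norm_eq_abs, hnum]
  have hTn0 := hT0 n
  have habs : |(P - Q) / μ n| ≤ (P + Q) / μ n := by
    rw [abs_div, abs_of_pos hμn]
    gcongr
    exact abs_le.mpr ⟨by linarith, by linarith⟩
  refine le_trans habs ?_
  have hp : P / μ n ≤ μ n * B := by
    rw [div_le_iff₀ hμn]
    calc P ≤ μ n ^ 2 * B := hPle
      _ = μ n * B * μ n := by ring
  have hq : Q / μ n ≤ (2 / C + 1) * T n := by
    rw [div_le_iff₀ hμn]
    have hmg : (m n : ℝ) ^ γ ≤ (m n : ℝ) := by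
      have h1m : (1:ℝ) ≤ (m n : ℝ) := by exact_mod_cast hmpos n
      calc (m n : ℝ) ^ γ ≤ (m n : ℝ) ^ (1:ℝ) :=
            Real.rpow_le_rpow_of_exponent_le h1m hγ1.le
        _ = (m n : ℝ) := Real.rpow_one _
    have hC2 : C / 2 < ((m n : ℝ) + 1) * μ n := by nlinarith
    have hfrac : 1 / ((m n : ℝ) + 1) ≤ 2 / C * μ n := by
      rw [div_le_iff₀ (by positivity : (0:ℝ) < (m n : ℝ) + 1)]
      have h2C : (0:ℝ) < 2 / C := by positivity
      have h4 := mul_lt_mul_of_pos_left hC2 h2C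
      have h5 : 2 / C * (C / 2) = 1 := by field_simp
      nlinarith
    calc Q ≤ (1 / ((m n : ℝ) + 1) + μ n) * T n := hQle
      _ ≤ (2 / C * μ n + μ n) * T n := by
          refine mul_le_mul_of_nonneg_right (by linarith) hTn0
      _ = (2 / C + 1) * T n * μ n := by ring
  calc (P + Q) / μ n = P / μ n + Q / μ n := add_div _ _ _
    _ ≤ μ n * B + (2 / C + 1) * T n := add_le_add hp hq

/-- Under the cut-off scaling `m_n → ∞`, `μ_n → 0⁺`, `m_n^γ·μ_n → C`
with `0 < C < b/(1−γ)`, the truncated density function expands as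
`R_{m_n}(e^{μ_n}) = ρ_c + σ_c²·μ_n + o(μ_n)`. -/
theorem truncated_density_expansion (b γ : ℝ) (hγ0 : 0 < γ) (hγ1 : γ < 1) (hb : 0 < b)
    (m : ℕ → ℕ) (μ : ℕ → ℝ) (C : ℝ)
    (hmpos : ∀ n, 0 < m n) (hμpos : ∀ n, 0 < μ n)
    (hm : Tendsto m atTop atTop) (hμ : Tendsto μ atTop (nhds 0))
    (hC : Tendsto (fun n => (m n : ℝ) ^ γ * μ n) atTop (nhds C))
    (hC0 : 0 < C) (hCb : C < b / (1 - γ)) :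
    Tendsto
      (fun n => (zrpRtrunc b γ (m n) (Real.exp (μ n)) - zrpRhoC b γ
        - zrpSigmaSq b γ * μ n) / μ n) atTop (nhds 0) := by
  have hwpos := zrpW_pos (b := b) (γ := γ) hb
  have hSsum := zrp_summable hγ0 hγ1 hb
  have key : ∀ q : ℕ, Tendsto
      (fun n => (zrpA b γ (μ n) (m n) q - zrpS b γ q - μ n * zrpS b γ (q + 1)) / μ n)
      atTop (𝓝 0) :=
    fun q => zrp_A_expansion hγ0 hγ1 hb m μ C hmpos hμpos hm hC hμ hC0 hCb q
  have hS0ge : (1:ℝ) ≤ zrpS b γ 0 := by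
    have h0 : ((0:ℕ):ℝ) ^ 0 * zrpW b γ 0 = 1 := by simp [zrpW]
    have h := Summable.le_tsum (hSsum 0) 0 fun i _ => mul_nonneg (by positivity) (hwpos i).le
    rw [h0] at h
    exact h
  have hS0 : 0 < zrpS b γ 0 := lt_of_lt_of_le one_pos hS0ge
  have hA0pos : ∀ n, 0 < zrpA b γ (μ n) (m n) 0 := by
    intro n
    rw [zrpA]
    refine Finset.sum_pos' (fun k _ => mul_nonneg (mul_nonneg (by positivity) (hwpos k).le)
      (by positivity)) ⟨0, Finset.mem_range.mpr (Nat.succ_pos _), ?_⟩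
    simp [zrpW]
  have he0 := key 0
  have he1 := key 1
  have he0' : Tendsto (fun n => zrpA b γ (μ n) (m n) 0 - zrpS b γ 0 - μ n * zrpS b γ 1)
      atTop (𝓝 0) := by
    have h := hμ.mul he0
    rw [mul_zero] at h
    exact h.congr fun n => by rw [mul_comm, div_mul_cancel₀ _ (ne_of_gt (hμpos n))]
  have hA0lim : Tendsto (fun n => zrpA b γ (μ n) (m n) 0) atTop (𝓝 (zrpS b γ 0)) := by
    have h := (he0'.add (hμ.mul_const (zrpS b γ 1))).add
      (tendsto_const_nhds : Tendsto (fun _ : ℕ => zrpS b γ 0) atTop (𝓝 (zrpS b γ 0)))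
    have hval : ((0:ℝ) + 0 * zrpS b γ 1) + zrpS b γ 0 = zrpS b γ 0 := by ring
    rw [hval] at h
    exact h.congr fun n => by ring
  have hS0eq : zrpS b γ 0 = ∑' k : ℕ, zrpW b γ k := by
    rw [zrpS]; exact tsum_congr fun k => by rw [pow_zero, one_mul]
  have hS1eq : zrpS b γ 1 = ∑' k : ℕ, (k:ℝ) * zrpW b γ k := by
    rw [zrpS]; exact tsum_congr fun k => by rw [pow_one]
  have hS2eq : zrpS b γ 2 = ∑' k : ℕ, (k:ℝ) ^ 2 * zrpW b γ k := by rw [zrpS]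
  have hrho : zrpRhoC b γ = zrpS b γ 1 / zrpS b γ 0 := by
    rw [zrpRhoC, ← hS0eq, ← hS1eq]
  have hsig : zrpSigmaSq b γ = zrpS b γ 2 / zrpS b γ 0 - (zrpS b γ 1 / zrpS b γ 0) ^ 2 := by
    rw [zrpSigmaSq, hrho, ← hS0eq, ← hS2eq]
  have hRt : ∀ n, zrpRtrunc b γ (m n) (Real.exp (μ n)) =
      zrpA b γ (μ n) (m n) 1 / zrpA b γ (μ n) (m n) 0 := by
    intro n
    rw [zrpRtrunc, zrpZtrunc, zrpA, zrpA]
    congr 1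
    · exact Finset.sum_congr rfl fun k _ => by rw [pow_one]
    · exact Finset.sum_congr rfl fun k _ => by rw [pow_zero, one_mul]
  set S0 := zrpS b γ 0
  set S1 := zrpS b γ 1
  set S2 := zrpS b γ 2
  have hnum : Tendsto (fun n =>
      ((zrpA b γ (μ n) (m n) 1 - S1 - μ n * S2) / μ n) * S0 ^ 2
      - S1 * S0 * ((zrpA b γ (μ n) (m n) 0 - S0 - μ n * S1) / μ n)
      - (S2 * S0 - S1 ^ 2) * (μ n * S1 + (zrpA b γ (μ n) (m n) 0 - S0 - μ n * S1)))
      atTop (𝓝 0) := by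
    have h := ((he1.mul_const (S0 ^ 2)).sub (he0.const_mul (S1 * S0))).sub
      (((hμ.mul_const S1).add he0').const_mul (S2 * S0 - S1 ^ 2))
    simpa only [zero_mul, mul_zero, add_zero, sub_zero] using h
  have hden : Tendsto (fun n => zrpA b γ (μ n) (m n) 0 * S0 ^ 2) atTop (𝓝 (S0 * S0 ^ 2)) :=
    hA0lim.mul_const _
  have hfin := hnum.div hden (mul_pos hS0 (pow_pos hS0 2)).ne'
  rw [zero_div] at hfin
  refine hfin.congr fun n => ?_
  simp only [Pi.div_apply]
  rw [hRt n, hrho, hsig]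
  have hA0 := (hA0pos n).ne'
  have hμn := (hμpos n).ne'
  have hS0' := hS0.ne'
  field_simp
  ring
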